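/- Let k ≥ 1 and ℓ ≥ 1 be integers, and let a_1,…,a_k and b_1,…,b_ℓ be positive integers such that a_1 ≥ a_i for all i and a_1 > b_j for all j. Suppose the rigidity identity holds in ℤ[x,y,z]: ∏_{i=1}^k (x·z^{a_i} + y) · ∏_{j=1}^ℓ (x + y·z^{b_j}) − ∏_{i=1}^k (x + y·z^{a_i}) · ∏_{j=1}^ℓ (x·z^{b_j} + y) = (x^k·y^ℓ − x^ℓ·y^k) · ∏_{i=1}^k (z^{a_i} − 1) · ∏_{j=1}^ℓ (z^{b_j} − 1). Then k·a_1 = b_1 + b_2 + … + b_ℓ. -/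

import Mathlib

open MvPolynomial

private lemma ntd_prod {ι : Type*} (s : Finset ι) (f : ι → Polynomial ℤ)
    (h : ∀ i ∈ s, f i ≠ 0) :
    (∏ i ∈ s, f i).natTrailingDegree = ∑ i ∈ s, (f i).natTrailingDegree := by
  classical
  induction s using Finset.induction with
  | empty => simp
  | insert _ _ hi ih =>
    rw [Finset.prod_insert hi, Finset.sum_insert hi,
      Polynomial.natTrailingDegree_mul (h _ (Finset.mem_insert_self _ _))
        (Finset.prod_ne_zero_iff.mpr fun i hi' => h _ (Finset.mem_insert_of_mem hi')),
      ih fun i hi' => h _ (Finset.mem_insert_of_mem hi')]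

private lemma aux_ne (c : ℤ) (d : ℕ) (hd : 0 < d) :
    (1 - Polynomial.C c * Polynomial.X ^ d : Polynomial ℤ) ≠ 0 := by
  intro h
  have := congrArg (fun p => Polynomial.coeff p 0) h
  simp [Polynomial.coeff_X_pow, hd.ne, hd.ne'] at this

private lemma aux_ntd (c : ℤ) (d : ℕ) (hd : 0 < d) :
    (1 - Polynomial.C c * Polynomial.X ^ d : Polynomial ℤ).natTrailingDegree = 0 := by
  rw [Polynomial.natTrailingDegree_eq_zero]
  right
  simp [Polynomial.coeff_X_pow, hd.ne, hd.ne']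

private lemma aux2_ne (d : ℕ) (hd : 0 < d) :
    ((Polynomial.X : Polynomial ℤ) ^ d - 1) ≠ 0 := by
  intro h
  have := congrArg (fun p => Polynomial.coeff p 0) h
  simp [Polynomial.coeff_X_pow, hd.ne, hd.ne'] at this

private lemma aux2_ntd (d : ℕ) (hd : 0 < d) :
    ((Polynomial.X : Polynomial ℤ) ^ d - 1).natTrailingDegree = 0 := by
  rw [Polynomial.natTrailingDegree_eq_zero]
  right
  simp [Polynomial.coeff_X_pow, hd.ne, hd.ne']

private lemma auxC (A m n : ℕ) (hA : 0 < A) (h : m < n) :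
    ((-((Polynomial.X : Polynomial ℤ) ^ A)) ^ m - (-((Polynomial.X : Polynomial ℤ) ^ A)) ^ n) ≠ 0 ∧
    ((-((Polynomial.X : Polynomial ℤ) ^ A)) ^ m -
      (-((Polynomial.X : Polynomial ℤ) ^ A)) ^ n).natTrailingDegree = m * A := by
  have e1 : ∀ p : ℕ, (-((Polynomial.X : Polynomial ℤ) ^ A)) ^ p
      = Polynomial.C ((-1 : ℤ) ^ p) * Polynomial.X ^ (p * A) := by
    intro p
    rw [neg_pow, map_pow, map_neg, map_one, mul_comm p A, pow_mul]
  have hd : 0 < (n - m) * A := Nat.mul_pos (Nat.sub_pos_of_lt h) hA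
  have decomp : (-((Polynomial.X : Polynomial ℤ) ^ A)) ^ m
        - (-((Polynomial.X : Polynomial ℤ) ^ A)) ^ n
      = Polynomial.C ((-1 : ℤ) ^ m) * Polynomial.X ^ (m * A) *
        (1 - Polynomial.C ((-1 : ℤ) ^ (n - m)) * Polynomial.X ^ ((n - m) * A)) := by
    rw [e1, e1, mul_sub, mul_one]
    congr 1
    rw [mul_mul_mul_comm, ← map_mul, ← pow_add, ← pow_add, ← add_mul, Nat.add_sub_cancel' h.le]
  have hCc : (Polynomial.C ((-1 : ℤ) ^ m) : Polynomial ℤ) ≠ 0 := by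
    simp [Polynomial.C_eq_zero]
  have hXp : ((Polynomial.X : Polynomial ℤ) ^ (m * A)) ≠ 0 :=
    pow_ne_zero _ Polynomial.X_ne_zero
  have hu := aux_ne ((-1 : ℤ) ^ (n - m)) _ hd
  constructor
  · rw [decomp]; exact mul_ne_zero (mul_ne_zero hCc hXp) hu
  · rw [decomp, Polynomial.natTrailingDegree_mul (mul_ne_zero hCc hXp) hu,
      Polynomial.natTrailingDegree_mul hCc hXp, aux_ntd _ _ hd,
      Polynomial.natTrailingDegree_C, Polynomial.natTrailingDegree_X_pow]
    simp

/-- **Equation (8) of the paper.** If positive integers `a₁ ≥ aᵢ`, `a₁ > bⱼ` satisfy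
the rigidity identity (equation (5) with denominators cleared) in `ℤ[x,y,z]`, then
`k·a₁ = b₁ + ⋯ + b_ℓ` (obtained by substituting `x = −z^{a₁}`, `y = 1`). -/
theorem stmt5 (k ℓ : ℕ) (hk : 1 ≤ k) (hℓ : 1 ≤ ℓ)
    (a : Fin k → ℕ) (b : Fin ℓ → ℕ)
    (ha : ∀ i, 0 < a i) (hb : ∀ j, 0 < b j)
    (hmax : ∀ i, a i ≤ a ⟨0, hk⟩) (hgt : ∀ j, b j < a ⟨0, hk⟩)
    (X Y Z : MvPolynomial (Fin 3) ℤ)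
    (hX : X = MvPolynomial.X 0) (hY : Y = MvPolynomial.X 1) (hZ : Z = MvPolynomial.X 2)
    (hrigid : (∏ i, (X * Z ^ (a i) + Y)) * (∏ j, (X + Y * Z ^ (b j))) -
        (∏ i, (X + Y * Z ^ (a i))) * (∏ j, (X * Z ^ (b j) + Y)) =
      (X ^ k * Y ^ ℓ - X ^ ℓ * Y ^ k) * (∏ i, (Z ^ (a i) - 1)) * (∏ j, (Z ^ (b j) - 1))) :
    k * a ⟨0, hk⟩ = ∑ j, b j := by
  subst hX hY hZ
  set A := a ⟨0, hk⟩ with hA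
  have hApos : 0 < A := ha _
  set v : Fin 3 → Polynomial ℤ := ![-(Polynomial.X ^ A), 1, Polynomial.X] with hv
  have hv0 : v 0 = -(Polynomial.X ^ A) := rfl
  have hv1 : v 1 = 1 := rfl
  have hv2 : v 2 = Polynomial.X := rfl
  have key := congrArg (aeval v) hrigid
  simp only [map_sub, map_mul, map_add, map_prod, map_pow, map_one, aeval_X,
    hv0, hv1, hv2, one_mul, mul_one, one_pow] at key
  -- the second product on the LHS vanishes
  have hz : (∏ i, (-(Polynomial.X ^ A : Polynomial ℤ) + Polynomial.X ^ (a i))) = 0 := by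
    refine Finset.prod_eq_zero (Finset.mem_univ ⟨0, hk⟩) ?_
    rw [← hA, neg_add_cancel]
  rw [hz, zero_mul, sub_zero] at key
  -- rewrite the remaining products in canonical form
  have hP : (∏ i, (-(Polynomial.X ^ A : Polynomial ℤ) * Polynomial.X ^ (a i) + 1))
      = ∏ i, (1 - Polynomial.C (1 : ℤ) * Polynomial.X ^ (A + a i)) := by
    refine Finset.prod_congr rfl fun i _ => ?_
    rw [map_one, pow_add]; ring
  have hQ : (∏ j, (-(Polynomial.X ^ A : Polynomial ℤ) + Polynomial.X ^ (b j)))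
      = ∏ j, Polynomial.X ^ (b j) * (1 - Polynomial.C (1 : ℤ) * Polynomial.X ^ (A - b j)) := by
    refine Finset.prod_congr rfl fun j _ => ?_
    rw [map_one, one_mul, mul_sub, mul_one, ← pow_add, Nat.add_sub_cancel' (hgt j).le]
    ring
  rw [hP, hQ] at key
  -- nonvanishing and trailing degrees of each piece
  have hPne : (∏ i, (1 - Polynomial.C (1 : ℤ) * Polynomial.X ^ (A + a i))) ≠ 0 :=
    Finset.prod_ne_zero_iff.mpr fun i _ => aux_ne _ _ (Nat.add_pos_left hApos _)
  have hQne : (∏ j, (Polynomial.X : Polynomial ℤ) ^ (b j) *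
      (1 - Polynomial.C (1 : ℤ) * Polynomial.X ^ (A - b j))) ≠ 0 :=
    Finset.prod_ne_zero_iff.mpr fun j _ =>
      mul_ne_zero (pow_ne_zero _ Polynomial.X_ne_zero)
        (aux_ne _ _ (Nat.sub_pos_of_lt (hgt j)))
  have hPntd : (∏ i, (1 - Polynomial.C (1 : ℤ) * Polynomial.X ^ (A + a i))).natTrailingDegree
      = 0 := by
    rw [ntd_prod _ _ fun i _ => aux_ne _ _ (Nat.add_pos_left hApos _)]
    exact Finset.sum_eq_zero fun i _ => aux_ntd _ _ (Nat.add_pos_left hApos _)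
  have hQntd : (∏ j, (Polynomial.X : Polynomial ℤ) ^ (b j) *
      (1 - Polynomial.C (1 : ℤ) * Polynomial.X ^ (A - b j))).natTrailingDegree = ∑ j, b j := by
    rw [ntd_prod _ _ fun j _ => mul_ne_zero (pow_ne_zero _ Polynomial.X_ne_zero)
      (aux_ne _ _ (Nat.sub_pos_of_lt (hgt j)))]
    refine Finset.sum_congr rfl fun j _ => ?_
    rw [Polynomial.natTrailingDegree_mul (pow_ne_zero _ Polynomial.X_ne_zero)
      (aux_ne _ _ (Nat.sub_pos_of_lt (hgt j))), Polynomial.natTrailingDegree_X_pow,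
      aux_ntd _ _ (Nat.sub_pos_of_lt (hgt j)), add_zero]
  have hAne : (∏ i, ((Polynomial.X : Polynomial ℤ) ^ (a i) - 1)) ≠ 0 :=
    Finset.prod_ne_zero_iff.mpr fun i _ => aux2_ne _ (ha i)
  have hBne : (∏ j, ((Polynomial.X : Polynomial ℤ) ^ (b j) - 1)) ≠ 0 :=
    Finset.prod_ne_zero_iff.mpr fun j _ => aux2_ne _ (hb j)
  have hAntd : (∏ i, ((Polynomial.X : Polynomial ℤ) ^ (a i) - 1)).natTrailingDegree = 0 := by
    rw [ntd_prod _ _ fun i _ => aux2_ne _ (ha i)]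
    exact Finset.sum_eq_zero fun i _ => aux2_ntd _ (ha i)
  have hBntd : (∏ j, ((Polynomial.X : Polynomial ℤ) ^ (b j) - 1)).natTrailingDegree = 0 := by
    rw [ntd_prod _ _ fun j _ => aux2_ne _ (hb j)]
    exact Finset.sum_eq_zero fun j _ => aux2_ntd _ (hb j)
  -- the sum of the b's is strictly less than ℓ·A
  have hsum_lt : ∑ j, b j < ℓ * A := by
    have h1 : ∑ j, b j < ∑ _j : Fin ℓ, A :=
      Finset.sum_lt_sum_of_nonempty (Finset.univ_nonempty_iff.mpr ⟨⟨0, hℓ⟩⟩)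
        (fun j _ => hgt j)
    simpa [Finset.sum_const, mul_comm] using h1
  -- case analysis on k vs ℓ
  rcases lt_trichotomy k ℓ with hkl | hkl | hkl
  · -- k < ℓ : take trailing degrees
    obtain ⟨hCne, hCntd⟩ := auxC A k ℓ hApos hkl
    have := congrArg Polynomial.natTrailingDegree key
    rw [Polynomial.natTrailingDegree_mul hPne hQne,
      Polynomial.natTrailingDegree_mul (mul_ne_zero hCne hAne) hBne,
      Polynomial.natTrailingDegree_mul hCne hAne,
      hPntd, hQntd, hAntd, hBntd, hCntd, zero_add, add_zero, add_zero] at this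
    omega
  · -- k = ℓ : contradiction, the RHS vanishes but the LHS does not
    exfalso
    have h0 : (-((Polynomial.X : Polynomial ℤ) ^ A)) ^ k - (-(Polynomial.X ^ A)) ^ ℓ = 0 := by
      rw [hkl, sub_self]
    rw [h0, zero_mul, zero_mul] at key
    exact (mul_ne_zero hPne hQne) key
  · -- ℓ < k : contradiction with hsum_lt
    exfalso
    obtain ⟨hCne, hCntd⟩ := auxC A ℓ k hApos hkl
    have hflip : (-((Polynomial.X : Polynomial ℤ) ^ A)) ^ k - (-(Polynomial.X ^ A)) ^ ℓ
        = -((-((Polynomial.X : Polynomial ℤ) ^ A)) ^ ℓ - (-(Polynomial.X ^ A)) ^ k) := by ring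
    rw [hflip] at key
    have hCne' : -((-((Polynomial.X : Polynomial ℤ) ^ A)) ^ ℓ - (-(Polynomial.X ^ A)) ^ k) ≠ 0 :=
      neg_ne_zero.mpr hCne
    have := congrArg Polynomial.natTrailingDegree key
    rw [Polynomial.natTrailingDegree_mul hPne hQne,
      Polynomial.natTrailingDegree_mul (mul_ne_zero hCne' hAne) hBne,
      Polynomial.natTrailingDegree_mul hCne' hAne,
      Polynomial.natTrailingDegree_neg,
      hPntd, hQntd, hAntd, hBntd, hCntd, zero_add, add_zero, add_zero] at this
    omega
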